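/- For the cycle C_n, the Mycielski graph satisfies λ(M(C_3)) = 6, λ(M(C_4)) = 8, λ(M(C_5)) = 10, and λ(M(C_n)) = n + 1 for all n ≥ 6. -/

import Mathlib

open SimpleGraph

abbrev MycVert (V : Type) : Type := V ⊕ V ⊕ Unit

def mycAdj {V : Type} (G : SimpleGraph V) : MycVert V → MycVert V → Prop
  | Sum.inl a, Sum.inl b => G.Adj a b
  | Sum.inl a, Sum.inr (Sum.inl b) => G.Adj a b
  | Sum.inr (Sum.inl a), Sum.inl b => G.Adj a b
  | Sum.inr (Sum.inl _), Sum.inr (Sum.inr _) => True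
  | Sum.inr (Sum.inr _), Sum.inr (Sum.inl _) => True
  | _, _ => False

/-- The Mycielski graph of `G`: `Sum.inl v` are original vertices, `Sum.inr (Sum.inl v)`
their copies, and `Sum.inr (Sum.inr ())` is the root. -/
def mycielski {V : Type} (G : SimpleGraph V) : SimpleGraph (MycVert V) where
  Adj := mycAdj G
  symm := ⟨by
    rintro (a | a | a) (b | b | b) h <;>
      first | exact G.adj_symm h | trivial | exact h.elim⟩
  loopless := ⟨by
    rintro (a | a | a) h <;> first | exact G.irrefl h | exact h⟩

def IterMycVert (V : Type) : ℕ → Type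
  | 0 => V
  | t + 1 => MycVert (IterMycVert V t)

/-- The `t`-th iterated Mycielski graph. -/
def iterMycielski {V : Type} (G : SimpleGraph V) : (t : ℕ) → SimpleGraph (IterMycVert V t)
  | 0 => G
  | t + 1 => mycielski (iterMycielski G t)

instance iterMycVertFintype (V : Type) [Fintype V] : (t : ℕ) → Fintype (IterMycVert V t)
  | 0 => inferInstanceAs (Fintype V)
  | t + 1 => letI := iterMycVertFintype V t
             inferInstanceAs (Fintype (MycVert (IterMycVert V t)))

/-- `f` is an `L(2,1)`-labeling of `G`. -/
def IsL21Labeling {V : Type} (G : SimpleGraph V) (f : V → ℕ) : Prop :=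
  (∀ x y, G.Adj x y → 2 ≤ ((f x : ℤ) - (f y : ℤ)).natAbs) ∧
  (∀ x y, G.dist x y = 2 → f x ≠ f y)

/-- The `L(2,1)`-labeling number `λ(G)`: the least `k` such that `G` has an
`L(2,1)`-labeling with labels in `{0, …, k}`. -/
noncomputable def lambdaNumber {V : Type} (G : SimpleGraph V) : ℕ :=
  sInf {k | ∃ f : V → ℕ, IsL21Labeling G f ∧ ∀ v, f v ≤ k}

/-! ### Auxiliary machinery -/

instance mycDec {V : Type} (G : SimpleGraph V) [DecidableRel G.Adj] :
    DecidableRel (mycielski G).Adj := fun x y =>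
  match x, y with
  | Sum.inl a, Sum.inl b => inferInstanceAs (Decidable (G.Adj a b))
  | Sum.inl a, Sum.inr (Sum.inl b) => inferInstanceAs (Decidable (G.Adj a b))
  | Sum.inl _, Sum.inr (Sum.inr _) => .isFalse id
  | Sum.inr (Sum.inl a), Sum.inl b => inferInstanceAs (Decidable (G.Adj a b))
  | Sum.inr (Sum.inl _), Sum.inr (Sum.inl _) => .isFalse id
  | Sum.inr (Sum.inl _), Sum.inr (Sum.inr _) => .isTrue trivial
  | Sum.inr (Sum.inr _), Sum.inl _ => .isFalse id
  | Sum.inr (Sum.inr _), Sum.inr (Sum.inl _) => .isTrue trivial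
  | Sum.inr (Sum.inr _), Sum.inr (Sum.inr _) => .isFalse id

lemma dist_eq_two_of {V : Type} {G : SimpleGraph V} {x y w : V} (hne : x ≠ y)
    (hxy : ¬ G.Adj x y) (h1 : G.Adj x w) (h2 : G.Adj w y) : G.dist x y = 2 := by
  have hle : G.dist x y ≤ 2 := by
    have := SimpleGraph.dist_le (Walk.cons h1 (Walk.cons h2 Walk.nil))
    simpa using this
  have h0 : G.dist x y ≠ 0 := by
    rw [SimpleGraph.dist_ne_zero_iff_ne_and_reachable]
    exact ⟨hne, ⟨Walk.cons h1 (Walk.cons h2 Walk.nil)⟩⟩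
  have hone : G.dist x y ≠ 1 := fun h => hxy (SimpleGraph.dist_eq_one_iff_adj.mp h)
  omega

lemma mid_of_dist_two {V : Type} {G : SimpleGraph V} {x y : V} (h : G.dist x y = 2) :
    x ≠ y ∧ ¬ G.Adj x y ∧ ∃ w, G.Adj x w ∧ G.Adj w y := by
  have hne : x ≠ y := by rintro rfl; rw [SimpleGraph.dist_self] at h; omega
  have hnadj : ¬ G.Adj x y := fun ha => by
    rw [← SimpleGraph.dist_eq_one_iff_adj] at ha; omega
  refine ⟨hne, hnadj, ?_⟩
  obtain ⟨p, hp⟩ := SimpleGraph.exists_walk_of_dist_ne_zero (by omega : G.dist x y ≠ 0)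
  rw [h] at hp
  cases p with
  | nil => simp at hp
  | cons h1 q =>
    cases q with
    | nil => simp at hp
    | cons h2 r =>
      cases r with
      | nil => exact ⟨_, h1, h2⟩
      | cons h3 s => simp [Walk.length_cons] at hp

lemma isL21_of_checks {V : Type} (G : SimpleGraph V) (f : V → ℕ)
    (h1 : ∀ x y, G.Adj x y → 2 ≤ ((f x : ℤ) - (f y : ℤ)).natAbs)
    (h2 : ∀ x y w, G.Adj x w → G.Adj w y → x = y ∨ G.Adj x y ∨ f x ≠ f y) :
    IsL21Labeling G f := by
  refine ⟨h1, ?_⟩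
  intro x y hd
  obtain ⟨hne, hnadj, w, hw1, hw2⟩ := mid_of_dist_two hd
  rcases h2 x y w hw1 hw2 with h | h | h
  exacts [absurd h hne, absurd h hnadj, h]

lemma lambda_eq {V : Type} (G : SimpleGraph V) (m : ℕ)
    (hub : ∃ f, IsL21Labeling G f ∧ ∀ v, f v ≤ m)
    (hlb : ∀ f, IsL21Labeling G f → ¬(∀ v, f v ≤ m - 1)) :
    lambdaNumber G = m := by
  unfold lambdaNumber
  have hmem : m ∈ {k | ∃ f : V → ℕ, IsL21Labeling G f ∧ ∀ v, f v ≤ k} := hub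
  apply le_antisymm (Nat.sInf_le hmem)
  by_contra hc
  push_neg at hc
  obtain ⟨f, hf, hb⟩ := Nat.sInf_mem (⟨m, hmem⟩ :
    {k | ∃ f : V → ℕ, IsL21Labeling G f ∧ ∀ v, f v ≤ k}.Nonempty)
  have hle : sInf {k | ∃ f : V → ℕ, IsL21Labeling G f ∧ ∀ v, f v ≤ k} ≤ m - 1 := Nat.le_sub_one_of_lt hc
  exact hlb f hf (fun v => le_trans (hb v) hle)

/-! ### Generic lower bound: `λ(M(C_n)) ≥ n + 1` -/

lemma lower_gen (n : ℕ) (hn : 2 ≤ n) (f : MycVert (Fin n) → ℕ)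
    (hf : IsL21Labeling (mycielski (cycleGraph n)) f)
    (hb : ∀ v, f v ≤ n) : False := by
  classical
  set G := mycielski (cycleGraph n) with hG
  let z : MycVert (Fin n) := Sum.inr (Sum.inr ())
  let u : Fin n → MycVert (Fin n) := fun j => Sum.inr (Sum.inl j)
  have hadjz : ∀ j, G.Adj (u j) z := fun j => trivial
  have hgap : ∀ j, 2 ≤ ((f (u j) : ℤ) - (f z : ℤ)).natAbs := fun j => hf.1 _ _ (hadjz j)
  have hinj : ∀ j k : Fin n, j ≠ k → f (u j) ≠ f (u k) := by
    intro j k hjk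
    apply hf.2
    refine dist_eq_two_of ?_ ?_ (hadjz j) (G.adj_symm (hadjz k))
    · intro hc
      simp only [u, Sum.inr.injEq, Sum.inl.injEq] at hc
      exact hjk hc
    · exact fun h => (h : False)
  let c := f z
  let c' := if c = 0 then 1 else c - 1
  have hcc' : c' ≠ c := by simp only [c']; split_ifs <;> omega
  have hcmem : c ∈ Finset.range (n + 1) := Finset.mem_range.mpr (by have := hb z; omega)
  have hc'mem : c' ∈ Finset.range (n + 1) := by
    have := hb z
    simp only [c', Finset.mem_range]
    split_ifs <;> omega
  have hsub : ∀ j : Fin n, f (u j) ∈ ((Finset.range (n + 1)).erase c').erase c := by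
    intro j
    have h2 := hgap j
    have h3 := hb (u j)
    rw [Finset.mem_erase, Finset.mem_erase, Finset.mem_range]
    refine ⟨by omega, ?_, by omega⟩
    simp only [c'] at *
    split_ifs at * <;> omega
  have hcard : (Finset.univ.image (fun j : Fin n => f (u j))).card = n := by
    rw [Finset.card_image_of_injective _
      (fun j k h => by by_contra hne; exact hinj j k hne h),
      Finset.card_univ, Fintype.card_fin]
  have hsubset : Finset.univ.image (fun j : Fin n => f (u j)) ⊆
      ((Finset.range (n + 1)).erase c').erase c := by
    intro x hx
    simp only [Finset.mem_image] at hx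
    obtain ⟨j, _, rfl⟩ := hx
    exact hsub j
  have hbound := Finset.card_le_card hsubset
  rw [hcard, Finset.card_erase_of_mem, Finset.card_erase_of_mem hc'mem] at hbound
  · rw [Finset.card_range] at hbound; omega
  · exact Finset.mem_erase.mpr ⟨fun h => hcc' h.symm, hcmem⟩

lemma lower_diam2 {V : Type} [Fintype V] (G : SimpleGraph V)
    (hcomm : ∀ x y : V, x = y ∨ G.Adj x y ∨ ∃ w, G.Adj x w ∧ G.Adj w y)
    (N : ℕ) (hcard : N + 1 < Fintype.card V)
    (f : V → ℕ) (hf : IsL21Labeling G f) (hb : ∀ v, f v ≤ N) : False := by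
  have hinjf : Function.Injective f := by
    intro x y hxy
    by_contra hne
    rcases hcomm x y with h | h | ⟨w, h1, h2⟩
    · exact hne h
    · have := hf.1 x y h; omega
    · by_cases hadj : G.Adj x y
      · have := hf.1 x y hadj; omega
      · exact hf.2 x y (dist_eq_two_of hne hadj h1 h2) hxy
  have hle : Fintype.card V ≤ N + 1 := by
    have := Fintype.card_le_of_injective
      (fun v => (⟨f v, by have := hb v; omega⟩ : Fin (N + 1)))
      (fun x y h => hinjf (by simpa [Fin.mk.injEq] using h))
    simpa using this
  omega

/-! ### Generic upper bound construction for `n ≥ 9` -/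

def gpat (n i : ℕ) : ℕ :=
  if i = 0 then 1 else if i = 1 then 6 else if i = 2 then 8 else if i = 5 then 10
  else if i = n - 1 then (if n % 3 = 1 then 7 else if n % 3 = 2 then 4 else 5)
  else if i = n - 2 then (if n % 3 = 2 then 7 else 2 * (i % 3) + 1)
  else 2 * (i % 3) + 1

def nbr (n k a : ℕ) : Prop :=
  k = a + 1 ∨ (a = n - 1 ∧ k = 0) ∨ a = k + 1 ∨ (k = n - 1 ∧ a = 0)

lemma nbr_symm {n k a : ℕ} (h : nbr n k a) : nbr n a k := by unfold nbr at *; omega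

lemma gpat_spec (n i : ℕ) (hn : 9 ≤ n) (hi : i < n) :
    (i = 0 ∧ gpat n i = 1) ∨ (i = 1 ∧ gpat n i = 6) ∨ (i = 2 ∧ gpat n i = 8) ∨
    (i = 5 ∧ gpat n i = 10) ∨
    (i = n - 1 ∧ n % 3 = 1 ∧ gpat n i = 7) ∨ (i = n - 1 ∧ n % 3 = 2 ∧ gpat n i = 4) ∨
    (i = n - 1 ∧ n % 3 = 0 ∧ gpat n i = 5) ∨
    (i = n - 2 ∧ n % 3 = 2 ∧ gpat n i = 7) ∨
    (3 ≤ i ∧ i ≠ 5 ∧ i ≠ n - 1 ∧ ¬(i = n - 2 ∧ n % 3 = 2) ∧ gpat n i = 2 * (i % 3) + 1) := by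
  unfold gpat; split_ifs with h0 h1 h2 h5 hL h31 h32 hM h32'
  · exact Or.inl ⟨h0, rfl⟩
  · exact Or.inr (Or.inl ⟨h1, rfl⟩)
  · exact Or.inr (Or.inr (Or.inl ⟨h2, rfl⟩))
  · exact Or.inr (Or.inr (Or.inr (Or.inl ⟨h5, rfl⟩)))
  · exact Or.inr (Or.inr (Or.inr (Or.inr (Or.inl ⟨hL, h31, rfl⟩))))
  · exact Or.inr (Or.inr (Or.inr (Or.inr (Or.inr (Or.inl ⟨hL, h32, rfl⟩)))))
  · exact Or.inr (Or.inr (Or.inr (Or.inr (Or.inr (Or.inr (Or.inl ⟨hL, by omega, rfl⟩))))))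
  · exact Or.inr (Or.inr (Or.inr (Or.inr (Or.inr (Or.inr (Or.inr (Or.inl ⟨hM, h32', rfl⟩)))))))
  · exact Or.inr (Or.inr (Or.inr (Or.inr (Or.inr (Or.inr (Or.inr (Or.inr
      ⟨by omega, h5, hL, fun hc => h32' hc.2, rfl⟩)))))))
  · exact Or.inr (Or.inr (Or.inr (Or.inr (Or.inr (Or.inr (Or.inr (Or.inr
      ⟨by omega, h5, hL, fun hc => hM hc.1, rfl⟩)))))))

lemma masterA {n a b : ℕ} (hn : 9 ≤ n) (ha : a < n) (hb : b < n) (h : nbr n a b) :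
    gpat n a + 2 ≤ gpat n b ∨ gpat n b + 2 ≤ gpat n a := by
  unfold nbr at h
  rcases gpat_spec n a hn ha with ⟨p,e⟩|⟨p,e⟩|⟨p,e⟩|⟨p,e⟩|⟨p,q,e⟩|⟨p,q,e⟩|⟨p,q,e⟩|⟨p,q,e⟩|⟨p,p5,pL,pM,e⟩ <;>
    rcases gpat_spec n b hn hb with ⟨p2,e2⟩|⟨p2,e2⟩|⟨p2,e2⟩|⟨p2,e2⟩|⟨p2,q2,e2⟩|⟨p2,q2,e2⟩|⟨p2,q2,e2⟩|⟨p2,q2,e2⟩|⟨p2,p5',pL',pM',e2⟩ <;>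
    rw [e, e2] <;> omega

lemma masterB {n a b k : ℕ} (hn : 9 ≤ n) (ha : a < n) (hb : b < n) (hk : k < n)
    (h1 : nbr n k a) (h2 : nbr n k b) (hne : a ≠ b) : gpat n a ≠ gpat n b := by
  unfold nbr at h1 h2
  rcases gpat_spec n a hn ha with ⟨p,e⟩|⟨p,e⟩|⟨p,e⟩|⟨p,e⟩|⟨p,q,e⟩|⟨p,q,e⟩|⟨p,q,e⟩|⟨p,q,e⟩|⟨p,p5,pL,pM,e⟩ <;>
    rcases gpat_spec n b hn hb with ⟨p2,e2⟩|⟨p2,e2⟩|⟨p2,e2⟩|⟨p2,e2⟩|⟨p2,q2,e2⟩|⟨p2,q2,e2⟩|⟨p2,q2,e2⟩|⟨p2,q2,e2⟩|⟨p2,p5',pL',pM',e2⟩ <;>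
    rw [e, e2] <;> omega

lemma masterC {n a j : ℕ} (hn : 9 ≤ n) (ha : a < n) (hj : j < n) (h : nbr n a j) :
    gpat n a + 2 ≤ j + 2 ∨ (j + 2) + 2 ≤ gpat n a := by
  unfold nbr at h
  rcases gpat_spec n a hn ha with ⟨p,e⟩|⟨p,e⟩|⟨p,e⟩|⟨p,e⟩|⟨p,q,e⟩|⟨p,q,e⟩|⟨p,q,e⟩|⟨p,q,e⟩|⟨p,p5,pL,pM,e⟩ <;>
    rw [e] <;> omega

lemma masterD {n a j k : ℕ} (hn : 9 ≤ n) (ha : a < n) (hj : j < n) (hk : k < n)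
    (h1 : nbr n k a) (h2 : nbr n k j) : gpat n a ≠ j + 2 := by
  unfold nbr at h1 h2
  rcases gpat_spec n a hn ha with ⟨p,e⟩|⟨p,e⟩|⟨p,e⟩|⟨p,e⟩|⟨p,q,e⟩|⟨p,q,e⟩|⟨p,q,e⟩|⟨p,q,e⟩|⟨p,p5,pL,pM,e⟩ <;>
    rw [e] <;> omega

lemma masterE {n a : ℕ} (hn : 9 ≤ n) (ha : a < n) : 1 ≤ gpat n a ∧ gpat n a ≤ n + 1 := by
  rcases gpat_spec n a hn ha with ⟨p,e⟩|⟨p,e⟩|⟨p,e⟩|⟨p,e⟩|⟨p,q,e⟩|⟨p,q,e⟩|⟨p,q,e⟩|⟨p,q,e⟩|⟨p,p5,pL,pM,e⟩ <;>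
    rw [e] <;> omega

lemma fin_sub_one {n : ℕ} (hn : 2 ≤ n) {a b : Fin n} (h : (a - b).val = 1) :
    a.val = b.val + 1 ∨ (b.val = n - 1 ∧ a.val = 0) := by
  rw [Fin.sub_def] at h
  simp only at h
  have ha := a.isLt; have hb := b.isLt
  rcases Nat.lt_or_ge (n - b.val + a.val) n with hc | hc
  · rw [Nat.mod_eq_of_lt hc] at h; omega
  · rw [Nat.mod_eq_sub_mod hc, Nat.mod_eq_of_lt (by omega)] at h; omega

lemma adj_nbr {n : ℕ} (hn : 2 ≤ n) {i j : Fin n} (h : (cycleGraph n).Adj i j) :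
    nbr n i.val j.val := by
  rw [cycleGraph_adj'] at h
  unfold nbr
  rcases h with h | h
  · rcases fin_sub_one hn h with h' | h' <;> omega
  · rcases fin_sub_one hn h with h' | h' <;> omega

def fgen (n : ℕ) : MycVert (Fin n) → ℕ
  | Sum.inl i => gpat n i.val
  | Sum.inr (Sum.inl j) => j.val + 2
  | Sum.inr (Sum.inr _) => 0

lemma upper_gen (n : ℕ) (hn : 9 ≤ n) :
    ∃ f, IsL21Labeling (mycielski (cycleGraph n)) f ∧ ∀ v, f v ≤ n + 1 := by
  have hn2 : 2 ≤ n := by omega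
  refine ⟨fgen n, ⟨?_, ?_⟩, ?_⟩
  · rintro (a | a | a) (b | b | b) h <;> simp only [fgen]
    · have := masterA hn a.isLt b.isLt (adj_nbr hn2 (show (cycleGraph n).Adj a b from h))
      omega
    · have := masterC hn a.isLt b.isLt (adj_nbr hn2 (show (cycleGraph n).Adj a b from h))
      omega
    · exact ((show False from h)).elim
    · have := masterC hn b.isLt a.isLt (nbr_symm (adj_nbr hn2 (show (cycleGraph n).Adj a b from h)))
      omega
    · exact ((show False from h)).elim
    · omega
    · exact ((show False from h)).elim
    · omega
    · exact ((show False from h)).elim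
  · intro x y hd
    obtain ⟨hne, hnadj, w, h1, h2⟩ := mid_of_dist_two hd
    rcases x with a | a | a <;> rcases y with b | b | b <;> simp only [fgen]
    · -- v v
      have hab : a.val ≠ b.val := fun hh => hne (congrArg Sum.inl (Fin.val_injective hh))
      rcases w with k | k | k
      · exact masterB hn a.isLt b.isLt k.isLt
          (nbr_symm (adj_nbr hn2 (show (cycleGraph n).Adj a k from h1)))
          (adj_nbr hn2 (show (cycleGraph n).Adj k b from h2)) hab
      · exact masterB hn a.isLt b.isLt k.isLt
          (nbr_symm (adj_nbr hn2 (show (cycleGraph n).Adj a k from h1)))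
          (adj_nbr hn2 (show (cycleGraph n).Adj k b from h2)) hab
      · exact ((show False from h1)).elim
    · -- v u
      rcases w with k | k | k
      · exact masterD hn a.isLt b.isLt k.isLt
          (nbr_symm (adj_nbr hn2 (show (cycleGraph n).Adj a k from h1)))
          (adj_nbr hn2 (show (cycleGraph n).Adj k b from h2))
      · exact ((show False from h2)).elim
      · exact ((show False from h1)).elim
    · -- v z
      have := masterE hn a.isLt; omega
    · -- u v
      rcases w with k | k | k
      · exact (masterD hn b.isLt a.isLt k.isLt
          (adj_nbr hn2 (show (cycleGraph n).Adj k b from h2))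
          (nbr_symm (adj_nbr hn2 (show (cycleGraph n).Adj a k from h1)))).symm
      · exact ((show False from h1)).elim
      · exact ((show False from h2)).elim
    · -- u u
      intro hh
      have : a = b := Fin.val_injective (by omega)
      exact hne (by rw [this])
    · -- u z
      omega
    · -- z v
      have := masterE hn b.isLt; omega
    · -- z u
      omega
    · -- z z
      cases a; cases b; exact (hne rfl).elim
  · rintro (a | a | a) <;> simp only [fgen]
    · exact (masterE hn a.isLt).2
    · have := a.isLt; omega
    · omega

/-! ### Small cases -/

def fsm (vl ul : List ℕ) (zl : ℕ) {m : ℕ} : MycVert (Fin m) → ℕ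
  | Sum.inl i => vl.getD i.val 0
  | Sum.inr (Sum.inl j) => ul.getD j.val 0
  | Sum.inr (Sum.inr _) => zl

lemma up3 : ∃ f, IsL21Labeling (mycielski (cycleGraph 3)) f ∧ ∀ v, f v ≤ 6 :=
  ⟨fsm [0,2,6] [4,3,5] 1, isL21_of_checks _ _ (by decide) (by decide), by decide⟩

lemma up4 : ∃ f, IsL21Labeling (mycielski (cycleGraph 4)) f ∧ ∀ v, f v ≤ 8 :=
  ⟨fsm [0,2,5,8] [4,3,6,7] 1, isL21_of_checks _ _ (by decide) (by decide), by decide⟩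

lemma up5 : ∃ f, IsL21Labeling (mycielski (cycleGraph 5)) f ∧ ∀ v, f v ≤ 10 :=
  ⟨fsm [0,2,4,1,5] [7,6,8,9,10] 3, isL21_of_checks _ _ (by decide) (by decide), by decide⟩

lemma up6 : ∃ f, IsL21Labeling (mycielski (cycleGraph 6)) f ∧ ∀ v, f v ≤ 7 :=
  ⟨fsm [0,3,6,1,4,6] [1,4,5,0,3,2] 7, isL21_of_checks _ _ (by decide) (by decide), by decide⟩

lemma up7 : ∃ f, IsL21Labeling (mycielski (cycleGraph 7)) f ∧ ∀ v, f v ≤ 8 :=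
  ⟨fsm [0,3,5,1,7,2,6] [1,2,6,0,4,3,5] 8, isL21_of_checks _ _ (by decide) (by decide), by decide⟩

lemma up8 : ∃ f, IsL21Labeling (mycielski (cycleGraph 8)) f ∧ ∀ v, f v ≤ 9 :=
  ⟨fsm [1,6,8,2,9,1,3,5] [2,3,4,5,6,7,8,9] 0, isL21_of_checks _ _ (by decide) (by decide), by decide⟩

/-- `λ(M(C_3)) = 6`, `λ(M(C_4)) = 8`, `λ(M(C_5)) = 10`, and `λ(M(C_n)) = n + 1` for `n ≥ 6`. -/
theorem lambdaNumber_mycielski_cycleGraph :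
    lambdaNumber (mycielski (SimpleGraph.cycleGraph 3)) = 6 ∧
    lambdaNumber (mycielski (SimpleGraph.cycleGraph 4)) = 8 ∧
    lambdaNumber (mycielski (SimpleGraph.cycleGraph 5)) = 10 ∧
    ∀ n : ℕ, 6 ≤ n → lambdaNumber (mycielski (SimpleGraph.cycleGraph n)) = n + 1 := by
  refine ⟨?_, ?_, ?_, ?_⟩
  · refine lambda_eq _ 6 up3 (fun f hf hb => ?_)
    exact lower_diam2 (mycielski (cycleGraph 3)) (by decide) 5 (by decide) f hf hb
  · refine lambda_eq _ 8 up4 (fun f hf hb => ?_)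
    exact lower_diam2 (mycielski (cycleGraph 4)) (by decide) 7 (by decide) f hf hb
  · refine lambda_eq _ 10 up5 (fun f hf hb => ?_)
    exact lower_diam2 (mycielski (cycleGraph 5)) (by decide) 9 (by decide) f hf hb
  · intro n hn
    have hlow : ∀ f, IsL21Labeling (mycielski (cycleGraph n)) f → ¬(∀ v, f v ≤ n + 1 - 1) :=
      fun f hf hb => lower_gen n (by omega) f hf (fun v => by have := hb v; omega)
    rcases Nat.lt_or_ge n 9 with h9 | h9
    · interval_cases n
      · exact lambda_eq _ 7 up6 hlow
      · exact lambda_eq _ 8 up7 hlow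
      · exact lambda_eq _ 9 up8 hlow
    · exact lambda_eq _ (n + 1) (upper_gen n h9) hlow
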